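/- Fix n ≥ 1, ν > 0 and σ ∈ (1/2,1]. There exist constants C > 0 and c > 0 such that for every t ≥ 0 and every ξ ∈ ℝⁿ with 0 < |ξ| ≤ ρ: |𝒦₃(t,ξ) − e^{−(ν/2)t|ξ|^{2σ}} sin(t|ξ|)/|ξ|| ≤ C e^{−c(1+t)|ξ|^{2σ}} ( t|ξ|^{4σ−2} + |ξ|^{4σ−3} ). -/

import Mathlib

private lemma sin_lip (x y : ℝ) : |Real.sin x - Real.sin y| ≤ |x - y| := by
  rw [Real.sin_sub_sin, abs_mul, abs_mul, abs_two]
  have h1 : |Real.sin ((x - y) / 2)| ≤ |x - y| / 2 := by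
    simpa [abs_div] using Real.abs_sin_le_abs (x := (x - y) / 2)
  have h2 : |Real.cos ((x + y) / 2)| ≤ 1 := Real.abs_cos_le_one _
  have h3 : |Real.sin ((x - y) / 2)| * |Real.cos ((x + y) / 2)| ≤ |x - y| / 2 * 1 :=
    mul_le_mul h1 h2 (abs_nonneg _) (by positivity)
  rw [mul_assoc]
  linarith

set_option maxHeartbeats 2000000 in
/-- Low-frequency approximation of the multiplier `𝒦₃` by the hybrid kernel
`e^{-(ν/2)t|ξ|^{2σ}} sin(t|ξ|)/|ξ|` for `σ ∈ (1/2,1]`. -/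
theorem stmt9 (n : ℕ) (hn : 1 ≤ n) (ν σ : ℝ) (hν : 0 < ν)
    (hσ : σ ∈ Set.Ioc (1/2 : ℝ) 1) (ρ : ℝ)
    (hρ : ρ = (1/2) * (2/ν) ^ ((1:ℝ)/(2*σ - 1)))
    (φ : EuclideanSpace ℝ (Fin n) → ℝ)
    (hφ : ∀ ξ, φ ξ = Real.sqrt (1 - ν^2/4 * ‖ξ‖ ^ (4*σ - 2))) :
    ∃ C > 0, ∃ c > 0, ∀ t : ℝ, 0 ≤ t →
      ∀ ξ : EuclideanSpace ℝ (Fin n), 0 < ‖ξ‖ → ‖ξ‖ ≤ ρ →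
        |Real.exp (-(ν/2) * t * ‖ξ‖ ^ (2*σ)) * Real.sin (t * ‖ξ‖ * φ ξ) / (‖ξ‖ * φ ξ) -
            Real.exp (-(ν/2) * t * ‖ξ‖ ^ (2*σ)) * Real.sin (t * ‖ξ‖) / ‖ξ‖|
          ≤ C * Real.exp (-c * (1 + t) * ‖ξ‖ ^ (2*σ)) *
              (t * ‖ξ‖ ^ (4*σ - 2) + ‖ξ‖ ^ (4*σ - 3)) := by
  obtain ⟨hσ1, hσ2⟩ := hσ
  have hs : (0:ℝ) < 2*σ - 1 := by linarith
  have h2ν : (0:ℝ) < 2/ν := by positivity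
  set b : ℝ := (1/2:ℝ) ^ (2*σ - 1) with hb_def
  have hb0 : 0 < b := Real.rpow_pos_of_pos (by norm_num) _
  have hb1 : b < 1 := Real.rpow_lt_one (by norm_num) (by norm_num) hs
  have hρpos : 0 < ρ := by rw [hρ]; positivity
  have hρs : ρ ^ (2*σ - 1) = b * (2/ν) := by
    rw [hρ, Real.mul_rpow (by norm_num) (Real.rpow_pos_of_pos h2ν _).le,
        ← Real.rpow_mul h2ν.le]
    rw [one_div_mul_cancel (ne_of_gt hs), Real.rpow_one, hb_def]
  have hb2 : b ^ 2 < 1 := by nlinarith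
  set φ0 : ℝ := Real.sqrt (1 - b ^ 2) with hφ0_def
  have hφ0 : 0 < φ0 := Real.sqrt_pos.mpr (by linarith)
  set K : ℝ := ν ^ 2 / 4 with hK_def
  have hK : 0 < K := by positivity
  have hρ42 : K * ρ ^ (4*σ - 2) = b ^ 2 := by
    have h42 : (4*σ - 2 : ℝ) = (2*σ - 1) * 2 := by ring
    rw [h42, Real.rpow_mul hρpos.le, Real.rpow_two, hρs, hK_def]
    field_simp
    ring
  refine ⟨(K / φ0) * Real.exp ((ν/4) * ρ ^ (2*σ)), by positivity, ν/4, by positivity,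
    fun t ht ξ => ?_⟩
  have hpv := hφ ξ
  revert hpv
  generalize ‖ξ‖ = r
  generalize φ ξ = p
  intro hpv hr hrρ
  set a : ℝ := K * r ^ (4*σ - 2) with ha_def
  have ha0 : 0 < a := by
    have := Real.rpow_pos_of_pos hr (4*σ - 2)
    positivity
  have haρ : a ≤ b ^ 2 := by
    rw [← hρ42, ha_def]
    have := Real.rpow_le_rpow hr.le hrρ (by linarith : (0:ℝ) ≤ 4*σ - 2)
    nlinarith
  have ha1 : a < 1 := lt_of_le_of_lt haρ hb2
  have hpval : p = Real.sqrt (1 - a) := by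
    rw [hpv, ha_def, hK_def]
  have hp0 : φ0 ≤ p := by
    rw [hpval, hφ0_def]
    exact Real.sqrt_le_sqrt (by linarith)
  have hppos : 0 < p := lt_of_lt_of_le hφ0 hp0
  have hq0 := Real.sqrt_nonneg (1 - a)
  have hq2 : Real.sqrt (1 - a) ^ 2 = 1 - a := Real.sq_sqrt (by linarith)
  have hq1 : Real.sqrt (1 - a) ≤ 1 := by nlinarith
  have hp1 : p ≤ 1 := by rw [hpval]; exact hq1
  have h1pa : 1 - p ≤ a := by
    have h : 1 - a ≤ Real.sqrt (1 - a) := by nlinarith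
    rw [hpval]; linarith
  set E : ℝ := Real.exp (-(ν/2) * t * r ^ (2*σ)) with hE_def
  have hEpos : 0 < E := Real.exp_pos _
  set num : ℝ := Real.sin (t*r*p) - Real.sin (t*r) * p with hnum_def
  have hkey : E * Real.sin (t*r*p) / (r*p) - E * Real.sin (t*r) / r
      = E * (num / (r*p)) := by
    rw [hnum_def]
    field_simp
  have hnum_le : |num| ≤ (t*r + 1) * a := by
    have h1 : |Real.sin (t*r*p) - Real.sin (t*r)| ≤ t*r*(1-p) := by
      have h := sin_lip (t*r*p) (t*r)
      have habs : |t*r*p - t*r| = t*r*(1-p) := by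
        rw [abs_of_nonpos (by nlinarith [mul_nonneg ht hr.le])]
        ring
      rw [habs] at h
      exact h
    have h2 : |Real.sin (t*r) * (1 - p)| ≤ 1 - p := by
      rw [abs_mul, abs_of_nonneg (by linarith : (0:ℝ) ≤ 1 - p)]
      have h := Real.abs_sin_le_one (t*r)
      nlinarith [abs_nonneg (Real.sin (t*r))]
    have hsplit : num = (Real.sin (t*r*p) - Real.sin (t*r)) + Real.sin (t*r) * (1 - p) := by
      rw [hnum_def]; ring
    calc |num| ≤ |Real.sin (t*r*p) - Real.sin (t*r)| + |Real.sin (t*r) * (1 - p)| := by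
          rw [hsplit]; exact abs_add_le _ _
      _ ≤ t*r*(1-p) + (1-p) := by linarith
      _ ≤ (t*r + 1) * a := by nlinarith [mul_nonneg ht hr.le]
  have hfrac : |num| / (r*p) ≤ ((t*r + 1) * a) / (r * φ0) := by
    apply div_le_div₀ (by positivity) hnum_le (by positivity)
    exact mul_le_mul_of_nonneg_left hp0 hr.le
  have hv : r ^ (4*σ - 2 : ℝ) = r ^ (4*σ - 3 : ℝ) * r := by
    rw [show (4*σ - 2:ℝ) = (4*σ - 3) + 1 by ring, Real.rpow_add hr, Real.rpow_one]
  have heq2 : ((t*r + 1) * a) / (r * φ0)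
      = (K / φ0) * (t * r ^ (4*σ - 2) + r ^ (4*σ - 3)) := by
    rw [ha_def, hv]
    field_simp
  have hsum_nonneg : 0 ≤ t * r ^ (4*σ - 2) + r ^ (4*σ - 3) := by
    have h1 := Real.rpow_nonneg hr.le (4*σ - 2)
    have h2 := Real.rpow_nonneg hr.le (4*σ - 3)
    positivity
  have hX : r ^ (2*σ) ≤ ρ ^ (2*σ) :=
    Real.rpow_le_rpow hr.le hrρ (by linarith)
  have hX0 : 0 ≤ r ^ (2*σ) := Real.rpow_nonneg hr.le _
  have hEbound : E * (K / φ0) ≤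
      (K / φ0) * Real.exp ((ν/4) * ρ ^ (2*σ)) * Real.exp (-(ν/4) * (1 + t) * r ^ (2*σ)) := by
    rw [mul_comm E (K / φ0), mul_assoc, ← Real.exp_add]
    apply mul_le_mul_of_nonneg_left _ (by positivity)
    rw [hE_def, Real.exp_le_exp]
    nlinarith [mul_nonneg ht hX0]
  calc |E * Real.sin (t*r*p) / (r*p) - E * Real.sin (t*r) / r|
      = E * (|num| / (r*p)) := by
        rw [hkey, abs_mul, abs_of_pos hEpos, abs_div, abs_of_pos (by positivity : (0:ℝ) < r*p)]
    _ ≤ E * ((K / φ0) * (t * r ^ (4*σ - 2) + r ^ (4*σ - 3))) := by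
        rw [← heq2]
        exact mul_le_mul_of_nonneg_left hfrac hEpos.le
    _ = (E * (K / φ0)) * (t * r ^ (4*σ - 2) + r ^ (4*σ - 3)) := by ring
    _ ≤ ((K / φ0) * Real.exp ((ν/4) * ρ ^ (2*σ)) * Real.exp (-(ν/4) * (1 + t) * r ^ (2*σ)))
          * (t * r ^ (4*σ - 2) + r ^ (4*σ - 3)) :=
        mul_le_mul_of_nonneg_right hEbound hsum_nonneg
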